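/- Let κ be an ordinal, let G = ⨁_{α<κ} ℝ/ℤ, and identify each element of ℝ/ℤ with its unique representative in [0,1). Let C = {x ∈ G : x has order greater than 2}, and for x ∈ C let μ(x) be the least α < κ such that the α-th coordinate π_α(x) ∉ {0, 1/2}. Let C₁ = {x ∈ C : π_{μ(x)}(x) = 1/4}. Then the restriction of μ to C₁ is a rank function on C₁: for every sequence x in G with FS(x) ⊆ C₁, (1) μ is finite-to-one on {x_n : n ∈ ℕ}, and (2) if μ(x_n) ≥ μ(x₀) for every n, then there is no sequence y in G with FS(y) ⊆ x₀ + FS₁(x). -/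

import Mathlib

/-- A *rank function* on a subset `A` of an additive semigroup `S` is a function `ρ` from `S` to
a (well-)ordered set `W` such that for every sequence `x` in `S` with `FS x ⊆ A`:
(1) the restriction of `ρ` to `{x n : n ∈ ℕ}` is finite-to-one, and
(2) if `ρ (x n) ≥ ρ (x 0)` for every `n`, then there is no sequence `y` in `S` with
`FS y ⊆ x₀ + FS₁ x`. -/
def IsRankFunction {S W : Type*} [AddSemigroup S] [LinearOrder W] (A : Set S) (ρ : S → W) :
    Prop :=
  ∀ x : Stream' S, Hindman.FS x ⊆ A →
    (∀ w : W, {s | s ∈ Set.range x ∧ ρ s = w}.Finite) ∧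
    ((∀ n : ℕ, ρ (x 0) ≤ ρ (x n)) →
      ∀ y : Stream' S, ¬ Hindman.FS y ⊆ (x.head + ·) '' Hindman.FS x.tail)

section Aux

local notation "Q2" => ((1/2 : ℝ) : AddCircle (1 : ℝ))
local notation "Q4" => ((1/4 : ℝ) : AddCircle (1 : ℝ))
local notation "Q34" => ((3/4 : ℝ) : AddCircle (1 : ℝ))

private lemma ac_ne {a b : ℝ} (ha : a ∈ Set.Ico (0:ℝ) 1) (hb : b ∈ Set.Ico (0:ℝ) 1)
    (hab : a ≠ b) : (a : AddCircle (1 : ℝ)) ≠ (b : AddCircle (1 : ℝ)) := by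
  haveI : Fact ((0:ℝ) < 1) := ⟨one_pos⟩
  have ha' : a ∈ Set.Ico (0:ℝ) (0+1) := by simpa using ha
  have hb' : b ∈ Set.Ico (0:ℝ) (0+1) := by simpa using hb
  rw [Ne, AddCircle.coe_eq_coe_iff_of_mem_Ico ha' hb']
  exact hab

private lemma ac_zero : ((0:ℝ) : AddCircle (1 : ℝ)) = 0 := rfl

private lemma acn20 : Q2 ≠ 0 := by
  rw [← ac_zero]; exact ac_ne (by norm_num) (by norm_num) (by norm_num)

private lemma acn40 : Q4 ≠ 0 := by
  rw [← ac_zero]; exact ac_ne (by norm_num) (by norm_num) (by norm_num)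

private lemma acn42 : Q4 ≠ Q2 := ac_ne (by norm_num) (by norm_num) (by norm_num)

private lemma acn30 : Q34 ≠ 0 := by
  rw [← ac_zero]; exact ac_ne (by norm_num) (by norm_num) (by norm_num)

private lemma acn32 : Q34 ≠ Q2 := ac_ne (by norm_num) (by norm_num) (by norm_num)

private lemma acn34 : Q34 ≠ Q4 := ac_ne (by norm_num) (by norm_num) (by norm_num)

private lemma aca44 : Q4 + Q4 = Q2 := by
  rw [← AddCircle.coe_add]; norm_num

private lemma aca42 : Q4 + Q2 = Q34 := by
  rw [← AddCircle.coe_add]; norm_num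

private lemma aca22 : Q2 + Q2 = 0 := by
  rw [← AddCircle.coe_add, show (1/2 + 1/2 : ℝ) = 1 by norm_num]
  exact AddCircle.coe_period 1

private lemma aca24 : Q2 + Q4 = Q34 := by rw [add_comm]; exact aca42

private lemma half_add {u v : AddCircle (1 : ℝ)} (hu : u = 0 ∨ u = Q2) (hv : v = 0 ∨ v = Q2) :
    u + v = 0 ∨ u + v = Q2 := by
  rcases hu with hu | hu <;> rcases hv with hv | hv
  · left; rw [hu, hv, add_zero]
  · right; rw [hu, hv, zero_add]
  · right; rw [hu, hv, add_zero]
  · left; rw [hu, hv, aca22]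

/- Stream / FS helpers -/

private lemma fs_drop_subset {M : Type*} [AddSemigroup M] (a : Stream' M) :
    ∀ {i j : ℕ}, i ≤ j → Hindman.FS (a.drop j) ⊆ Hindman.FS (a.drop i) := by
  intro i j h
  induction j with
  | zero => rw [Nat.le_zero.mp h]
  | succ j ih =>
    rcases Nat.lt_or_ge i (j+1) with h' | h'
    · have h1 : Hindman.FS (a.drop (j+1)) ⊆ Hindman.FS (a.drop j) := by
        intro m hm
        refine Hindman.FS.tail _ m ?_
        rwa [Stream'.tail_drop']
      exact h1.trans (ih (Nat.lt_succ_iff.mp h'))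
    · have : i = j + 1 := le_antisymm h h'
      subst this
      exact fun m hm => hm

private lemma x_mem_fs_drop {M : Type*} [AddSemigroup M] (a : Stream' M) (n : ℕ) :
    a n ∈ Hindman.FS (a.drop n) := by
  have := Hindman.FS.head (a.drop n)
  rwa [Stream'.head_drop] at this

private lemma x_mem_fs {M : Type*} [AddSemigroup M] (a : Stream' M) (n : ℕ) :
    a n ∈ Hindman.FS a := by
  have := fs_drop_subset a (Nat.zero_le n) (x_mem_fs_drop a n)
  rwa [Stream'.drop_zero] at this

private lemma add_mem_fs_drop {M : Type*} [AddSemigroup M] (a : Stream' M) (k : ℕ) {m : M}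
    (hm : m ∈ Hindman.FS (a.drop (k+1))) : a k + m ∈ Hindman.FS (a.drop k) := by
  have h' : m ∈ Hindman.FS (a.drop k).tail := by rwa [Stream'.tail_drop']
  have := Hindman.FS.cons (a.drop k) m h'
  rwa [Stream'.head_drop] at this

private lemma add3_mem_fs {M : Type*} [AddSemigroup M] (a : Stream' M) {i j k : ℕ}
    (hij : i < j) (hjk : j < k) : a i + (a j + a k) ∈ Hindman.FS a := by
  have h1 : a k ∈ Hindman.FS (a.drop (j+1)) := fs_drop_subset a hjk (x_mem_fs_drop a k)
  have h2 : a j + a k ∈ Hindman.FS (a.drop j) := add_mem_fs_drop a j h1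
  have h3 : a j + a k ∈ Hindman.FS (a.drop (i+1)) := fs_drop_subset a hij h2
  have h4 := add_mem_fs_drop a i h3
  have := fs_drop_subset a (Nat.zero_le i) h4
  rwa [Stream'.drop_zero] at this

end Aux

/-- Let `G = ⨁_{α<κ} ℝ/ℤ` (finitely supported maps from a well-ordered index type `ι` to
`ℝ/ℤ = AddCircle 1`), let `C` be the set of elements of order greater than `2` (i.e.
`x + x ≠ 0`), and for `x ∈ C` let `μ x` be the least `α` such that the `α`-th coordinate of `x`
is not in `{0, 1/2}`.  Then `μ` is a rank function on
`C₁ = {x ∈ C : π_{μ x} (x) = 1/4}`. -/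
theorem mu_isRankFunction_C1 {ι : Type*} [LinearOrder ι] [WellFoundedLT ι]
    (μ : (ι →₀ AddCircle (1 : ℝ)) → ι)
    (hμ : ∀ x : ι →₀ AddCircle (1 : ℝ), x + x ≠ 0 →
      IsLeast {α : ι |
        x α ∉ ({0, ((1/2 : ℝ) : AddCircle (1 : ℝ))} : Set (AddCircle (1 : ℝ)))} (μ x)) :
    IsRankFunction
      {x : ι →₀ AddCircle (1 : ℝ) | x + x ≠ 0 ∧ x (μ x) = ((1/4 : ℝ) : AddCircle (1 : ℝ))}
      μ := by
  intro x hFS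
  -- coordinates below `μ z` lie in {0, 1/2}
  have hlow : ∀ z : ι →₀ AddCircle (1 : ℝ), z + z ≠ 0 → ∀ β, β < μ z →
      z β = 0 ∨ z β = ((1/2 : ℝ) : AddCircle (1 : ℝ)) := by
    intro z hz β hβ
    by_contra hcon
    push_neg at hcon
    have hβS : β ∈ {α : ι | z α ∉ ({0, ((1/2 : ℝ) : AddCircle (1 : ℝ))} :
        Set (AddCircle (1 : ℝ)))} := by
      simp only [Set.mem_setOf_eq, Set.mem_insert_iff, Set.mem_singleton_iff]
      push_neg
      exact hcon
    exact absurd ((hμ z hz).2 hβS) (not_le.mpr hβ)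
  -- if all coordinates below w are in {0,1/2} and the w'th is not, then μ z = w,
  -- so the w'th coordinate is 1/4
  have hforce : ∀ z : ι →₀ AddCircle (1 : ℝ), z + z ≠ 0 →
      z (μ z) = ((1/4 : ℝ) : AddCircle (1 : ℝ)) → ∀ w : ι,
      (∀ β, β < w → z β = 0 ∨ z β = ((1/2 : ℝ) : AddCircle (1 : ℝ))) →
      ¬ (z w = 0 ∨ z w = ((1/2 : ℝ) : AddCircle (1 : ℝ))) →
      z w = ((1/4 : ℝ) : AddCircle (1 : ℝ)) := by
    intro z hz2 hzq w hlows hnot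
    have hls := hμ z hz2
    have hwS : w ∈ {α : ι | z α ∉ ({0, ((1/2 : ℝ) : AddCircle (1 : ℝ))} :
        Set (AddCircle (1 : ℝ)))} := by
      simp only [Set.mem_setOf_eq, Set.mem_insert_iff, Set.mem_singleton_iff]
      tauto
    have h1 : μ z ≤ w := hls.2 hwS
    have h2 : ¬ μ z < w := by
      intro hc
      have hmem := hls.1
      simp only [Set.mem_setOf_eq, Set.mem_insert_iff, Set.mem_singleton_iff] at hmem
      exact hmem (hlows _ hc)
    have : μ z = w := le_antisymm h1 (not_lt.mp h2)
    rw [← this]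
    exact hzq
  constructor
  · -- part (1): finite-to-one
    intro w
    have tripleX : ∀ i j k : ℕ, i < j → j < k →
        μ (x i) = w → μ (x j) = w → μ (x k) = w → False := by
      intro i j k hij hjk hi hj hk
      have hs : x i + (x j + x k) ∈ Hindman.FS x := add3_mem_fs x hij hjk
      have hsC := hFS hs
      have hCi := hFS (x_mem_fs x i)
      have hCj := hFS (x_mem_fs x j)
      have hCk := hFS (x_mem_fs x k)
      have hqi : x i w = ((1/4 : ℝ) : AddCircle (1 : ℝ)) := by rw [← hi]; exact hCi.2
      have hqj : x j w = ((1/4 : ℝ) : AddCircle (1 : ℝ)) := by rw [← hj]; exact hCj.2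
      have hqk : x k w = ((1/4 : ℝ) : AddCircle (1 : ℝ)) := by rw [← hk]; exact hCk.2
      have hlows : ∀ β, β < w → (x i + (x j + x k)) β = 0 ∨
          (x i + (x j + x k)) β = ((1/2 : ℝ) : AddCircle (1 : ℝ)) := by
        intro β hβ
        rw [Finsupp.add_apply, Finsupp.add_apply]
        exact half_add (hlow _ hCi.1 β (by rw [hi]; exact hβ))
          (half_add (hlow _ hCj.1 β (by rw [hj]; exact hβ))
            (hlow _ hCk.1 β (by rw [hk]; exact hβ)))
      have hval : (x i + (x j + x k)) w = ((3/4 : ℝ) : AddCircle (1 : ℝ)) := by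
        rw [Finsupp.add_apply, Finsupp.add_apply, hqi, hqj, hqk, aca44, aca42]
      have hq := hforce _ hsC.1 hsC.2 w hlows (by
        rw [hval]
        rintro (h | h)
        · exact acn30 h
        · exact acn32 h)
      rw [hval] at hq
      exact acn34 hq
    have hI : {n : ℕ | μ (x n) = w}.Finite := by
      by_contra hinf
      have hinf' : {n : ℕ | μ (x n) = w}.Infinite := hinf
      obtain ⟨i, hi⟩ := hinf'.nonempty
      obtain ⟨j, hj⟩ := (hinf'.diff (Set.finite_Iic i)).nonempty
      obtain ⟨k, hk⟩ := (hinf'.diff (Set.finite_Iic j)).nonempty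
      exact tripleX i j k (not_le.mp (fun h => hj.2 h)) (not_le.mp (fun h => hk.2 h))
        hi hj.1 hk.1
    refine ((hI.image x).subset ?_)
    rintro s ⟨⟨n, rfl⟩, hsw⟩
    exact ⟨n, hsw, rfl⟩
  · -- part (2)
    intro hge y hy
    have hx0mem : x 0 ∈ Hindman.FS x := Hindman.FS.head x
    have hx0C : x 0 + x 0 ≠ 0 ∧ x 0 (μ (x 0)) = ((1/4 : ℝ) : AddCircle (1 : ℝ)) := hFS hx0mem
    -- each x n (n ≥ 1) has coordinates < α in {0,1/2} and α'th coordinate in {0, 1/4}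
    have hsingle : ∀ n : ℕ, 1 ≤ n →
        (∀ β, β < μ (x 0) → x n β = 0 ∨ x n β = ((1/2 : ℝ) : AddCircle (1 : ℝ))) ∧
        (x n (μ (x 0)) = 0 ∨ x n (μ (x 0)) = ((1/4 : ℝ) : AddCircle (1 : ℝ))) := by
      intro n hn
      have hxn : x n ∈ Hindman.FS x := x_mem_fs x n
      have hC := hFS hxn
      have hμn : μ (x 0) ≤ μ (x n) := hge n
      refine ⟨fun β hβ => hlow _ hC.1 β (lt_of_lt_of_le hβ hμn), ?_⟩
      rcases eq_or_lt_of_le hμn with he | hltn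
      · right
        rw [he]
        exact hC.2
      · left
        have hmemtail : x n ∈ Hindman.FS x.tail := by
          have h1 : x n ∈ Hindman.FS (x.drop n) := x_mem_fs_drop x n
          exact fs_drop_subset x hn h1
        have hs : x 0 + x n ∈ Hindman.FS x := Hindman.FS.cons x (x n) hmemtail
        have hsC := hFS hs
        have hxnα : x n (μ (x 0)) = 0 ∨ x n (μ (x 0)) = ((1/2 : ℝ) : AddCircle (1 : ℝ)) :=
          hlow _ hC.1 _ hltn
        have hlows : ∀ β, β < μ (x 0) → (x 0 + x n) β = 0 ∨
            (x 0 + x n) β = ((1/2 : ℝ) : AddCircle (1 : ℝ)) := by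
          intro β hβ
          rw [Finsupp.add_apply]
          exact half_add (hlow _ hx0C.1 β hβ) (hlow _ hC.1 β (hβ.trans_le hμn))
        have hval : (x 0 + x n) (μ (x 0)) =
            ((1/4 : ℝ) : AddCircle (1 : ℝ)) + x n (μ (x 0)) := by
          rw [Finsupp.add_apply, hx0C.2]
        have hnot : ¬ ((x 0 + x n) (μ (x 0)) = 0 ∨
            (x 0 + x n) (μ (x 0)) = ((1/2 : ℝ) : AddCircle (1 : ℝ))) := by
          rcases hxnα with h | h
          · rw [hval, h, add_zero]
            rintro (h' | h')
            · exact acn40 h'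
            · exact acn42 h'
          · rw [hval, h, aca42]
            rintro (h' | h')
            · exact acn30 h'
            · exact acn32 h'
        have hq := hforce _ hsC.1 hsC.2 (μ (x 0)) hlows hnot
        rw [hval] at hq
        have : ((1/4 : ℝ) : AddCircle (1 : ℝ)) + x n (μ (x 0)) =
            ((1/4 : ℝ) : AddCircle (1 : ℝ)) + 0 := by rw [add_zero]; exact hq
        exact add_left_cancel this
    -- key invariant for all elements of FS x.tail
    have key : ∀ (a : Stream' (ι →₀ AddCircle (1 : ℝ))) (t : ι →₀ AddCircle (1 : ℝ)),
        t ∈ Hindman.FS a → ∀ k : ℕ, a = x.tail.drop k →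
        (∀ β, β < μ (x 0) → t β = 0 ∨ t β = ((1/2 : ℝ) : AddCircle (1 : ℝ))) ∧
        (t (μ (x 0)) = 0 ∨ t (μ (x 0)) = ((1/4 : ℝ) : AddCircle (1 : ℝ))) := by
      intro a t ht
      induction ht with
      | head' a =>
        intro k hk
        have hhead : a.head = x (k+1) := by
          rw [hk, Stream'.head_drop]
          rfl
        rw [hhead]
        exact hsingle (k+1) (Nat.le_add_left 1 k)
      | tail' a m hm ih =>
        intro k hk
        exact ih (k+1) (by rw [hk, Stream'.tail_drop'])
      | cons' a m hm ih =>
        intro k hk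
        have h1 := hsingle (k+1) (Nat.le_add_left 1 k)
        have h2 := ih (k+1) (by rw [hk, Stream'.tail_drop'])
        have hhead : a.head = x (k+1) := by
          rw [hk, Stream'.head_drop]
          rfl
        constructor
        · intro β hβ
          rw [Finsupp.add_apply, hhead]
          exact half_add (h1.1 β hβ) (h2.1 β hβ)
        · rw [Finsupp.add_apply, hhead]
          rcases h1.2 with hA | hA <;> rcases h2.2 with hB | hB
          · left; rw [hA, hB, add_zero]
          · right; rw [hA, hB, zero_add]
          · right; rw [hA, hB, add_zero]
          · exfalso
            have hmem : a.head + m ∈ Hindman.FS a := Hindman.FS.cons a m hm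
            have htail : a.head + m ∈ Hindman.FS x.tail := by
              rw [hk]
              have h' := fs_drop_subset x.tail (Nat.zero_le k) (hk ▸ hmem)
              rwa [Stream'.drop_zero] at h'
            have hs : x 0 + (a.head + m) ∈ Hindman.FS x :=
              Hindman.FS.cons x (a.head + m) htail
            have hsC := hFS hs
            have hlows : ∀ β, β < μ (x 0) → (x 0 + (a.head + m)) β = 0 ∨
                (x 0 + (a.head + m)) β = ((1/2 : ℝ) : AddCircle (1 : ℝ)) := by
              intro β hβ
              rw [Finsupp.add_apply, Finsupp.add_apply, hhead]
              exact half_add (hlow _ hx0C.1 β hβ) (half_add (h1.1 β hβ) (h2.1 β hβ))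
            have hval : (x 0 + (a.head + m)) (μ (x 0)) = ((3/4 : ℝ) : AddCircle (1 : ℝ)) := by
              rw [Finsupp.add_apply, Finsupp.add_apply, hhead, hx0C.2, hA, hB, aca44, aca42]
            have hq := hforce _ hsC.1 hsC.2 (μ (x 0)) hlows (by
              rw [hval]
              rintro (h' | h')
              · exact acn30 h'
              · exact acn32 h')
            rw [hval] at hq
            exact acn34 hq
    -- every element of x₀ + FS₁ x has α'th coordinate in {1/2, 1/4}
    have hstar : ∀ z, z ∈ (x.head + ·) '' Hindman.FS x.tail →
        z (μ (x 0)) = ((1/2 : ℝ) : AddCircle (1 : ℝ)) ∨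
        z (μ (x 0)) = ((1/4 : ℝ) : AddCircle (1 : ℝ)) := by
      intro z hz
      obtain ⟨t, ht, rfl⟩ := hz
      have h2 := (key x.tail t ht 0 (by rw [Stream'.drop_zero])).2
      have hxh : x.head (μ (x 0)) = ((1/4 : ℝ) : AddCircle (1 : ℝ)) := hx0C.2
      show (x.head + t) (μ (x 0)) = _ ∨ (x.head + t) (μ (x 0)) = _
      rw [Finsupp.add_apply, hxh]
      rcases h2 with h | h
      · right; rw [h, add_zero]
      · left; rw [h, aca44]
    -- now derive the contradiction from y
    have hyz : ∀ {z}, z ∈ Hindman.FS y →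
        z (μ (x 0)) = ((1/2 : ℝ) : AddCircle (1 : ℝ)) ∨
        z (μ (x 0)) = ((1/4 : ℝ) : AddCircle (1 : ℝ)) :=
      fun hz => hstar _ (hy hz)
    have m0 : y.head ∈ Hindman.FS y := Hindman.FS.head y
    have m1 : y.tail.head ∈ Hindman.FS y :=
      Hindman.FS.tail y _ (Hindman.FS.head y.tail)
    have m2 : y.tail.tail.head ∈ Hindman.FS y :=
      Hindman.FS.tail y _ (Hindman.FS.tail y.tail _ (Hindman.FS.head y.tail.tail))
    have m01 : y.head + y.tail.head ∈ Hindman.FS y :=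
      Hindman.FS.cons y _ (Hindman.FS.head y.tail)
    have m12 : y.tail.head + y.tail.tail.head ∈ Hindman.FS y :=
      Hindman.FS.tail y _ (Hindman.FS.cons y.tail _ (Hindman.FS.head y.tail.tail))
    have m012 : y.head + (y.tail.head + y.tail.tail.head) ∈ Hindman.FS y :=
      Hindman.FS.cons y _ (Hindman.FS.cons y.tail _ (Hindman.FS.head y.tail.tail))
    have hA := hyz m0
    have hB := hyz m1
    have hC := hyz m2
    have hAB := hyz m01
    have hBC := hyz m12
    have hABC := hyz m012
    rw [Finsupp.add_apply] at hAB hBC hABC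
    rw [Finsupp.add_apply] at hABC
    rcases hA with hA | hA <;> rcases hB with hB | hB
    · rw [hA, hB, aca22] at hAB
      rcases hAB with h | h
      · exact acn20 h.symm
      · exact acn40 h.symm
    · rw [hA, hB, aca24] at hAB
      rcases hAB with h | h
      · exact acn32 h
      · exact acn34 h
    · rw [hA, hB, aca42] at hAB
      rcases hAB with h | h
      · exact acn32 h
      · exact acn34 h
    · rcases hC with hC | hC
      · rw [hB, hC, aca42] at hBC
        rcases hBC with h | h
        · exact acn32 h
        · exact acn34 h
      · rw [hA, hB, hC, aca44, aca42] at hABC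
        rcases hABC with h | h
        · exact acn32 h
        · exact acn34 h
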